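/- arXiv:1112.1769 — 2 statements merged into one kernel-verified Lean document; each statement's English description precedes it below -/
import Mathlib

section
/- Consider the one-particle heat-transfer kernel: given kinetic energy T, draw ξ ~ Gamma(3/2, β) independently and then draw the new energy T₁ from the conditional density of ζ₁ given ζ₁+ζ₂ = T+ξ for i.i.d. ζ₁, ζ₂ ~ Gamma(3/2, β). Then the Gamma(3/2, β) distribution (i.e., density c√x e^{-βx}) is invariant for this kernel. -/
open MeasureTheory ProbabilityTheory Real

/-- The Kac conditional density `p(x | s)` of `ζ₁` given `ζ₁ + ζ₂ = s` for i.i.d.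
Gamma(a, ·) variables. -/
noncomputable def kacCondDensity (a x s : ℝ) : ℝ :=
  (Real.Gamma (2 * a) / (Real.Gamma a) ^ 2) * x ^ (a - 1) * (s - x) ^ (a - 1) / s ^ (2 * a - 1)

/-- The distribution on `(0, s)` with density `p(· | s)`. -/
noncomputable def kacCondMeasure (a s : ℝ) : Measure ℝ :=
  (volume.restrict (Set.Ioo 0 s)).withDensity fun x => ENNReal.ofReal (kacCondDensity a x s)

/-- The one-particle heat-transfer kernel at inverse temperature `β`: given kinetic
energy `T`, draw `ξ ~ Gamma(3/2, β)` (the energy of an outside molecule, i.e. χ²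
with 3 degrees of freedom), then draw the new energy `T₁` from the Kac conditional
density `p(· | T + ξ)` on `[0, T + ξ]`. -/
noncomputable def heatKernel (β T : ℝ) : Measure ℝ :=
  (gammaMeasure (3 / 2) β).bind fun ξ => kacCondMeasure (3 / 2) (T + ξ)

open scoped ENNReal NNReal

namespace KacInv

lemma meas_gammaPDF (a r : ℝ) : Measurable (gammaPDF a r) :=
  (measurable_gammaPDFReal a r).ennreal_ofReal

lemma gammaPDF_of_nonpos {a r x : ℝ} (ha : 1 < a) (hx : x ≤ 0) : gammaPDF a r x = 0 := by
  rcases lt_or_eq_of_le hx with h | h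
  · exact gammaPDF_of_neg h
  · subst h
    simp [gammaPDF_eq, gammaPDFReal, Real.zero_rpow (by linarith : a - 1 ≠ 0)]

lemma meas_kd : Measurable fun q : ℝ × ℝ => kacCondDensity (3 / 2) q.2 q.1 := by
  unfold kacCondDensity
  have h1 : Measurable fun q : ℝ × ℝ => q.2 ^ ((3:ℝ) / 2 - 1) :=
    (Real.continuous_rpow_const (by norm_num)).measurable.comp measurable_snd
  have h2 : Measurable fun q : ℝ × ℝ => (q.1 - q.2) ^ ((3:ℝ) / 2 - 1) :=
    (Real.continuous_rpow_const (by norm_num)).measurable.comp (measurable_fst.sub measurable_snd)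
  have h3 : Measurable fun q : ℝ × ℝ => q.1 ^ (2 * ((3:ℝ) / 2) - 1) :=
    (Real.continuous_rpow_const (by norm_num)).measurable.comp measurable_fst
  exact ((measurable_const.mul h1).mul h2).div h3

noncomputable def kind (A : Set ℝ) : ℝ × ℝ → ℝ≥0∞ := fun q =>
  (A ∩ Set.Ioo 0 q.1).indicator (fun x => ENNReal.ofReal (kacCondDensity (3 / 2) x q.1)) q.2

lemma meas_kind {A : Set ℝ} (hA : MeasurableSet A) : Measurable (kind A) := by
  have heq : kind A = Set.indicator {q : ℝ × ℝ | q.2 ∈ A ∧ q.2 ∈ Set.Ioo 0 q.1}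
      (fun q => ENNReal.ofReal (kacCondDensity (3 / 2) q.2 q.1)) := by
    funext q
    by_cases h : q.2 ∈ A ∩ Set.Ioo 0 q.1
    · rw [kind, Set.indicator_of_mem h, Set.indicator_of_mem (by exact h)]
    · rw [kind, Set.indicator_of_notMem h, Set.indicator_of_notMem (by exact h)]
  rw [heq]
  have hset : MeasurableSet {q : ℝ × ℝ | q.2 ∈ A ∧ q.2 ∈ Set.Ioo 0 q.1} := by
    have : {q : ℝ × ℝ | q.2 ∈ A ∧ q.2 ∈ Set.Ioo 0 q.1}
        = (Prod.snd ⁻¹' A) ∩ ({q : ℝ × ℝ | 0 < q.2} ∩ {q : ℝ × ℝ | q.2 < q.1}) := by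
      ext q; simp [Set.mem_Ioo, and_assoc]
    rw [this]
    exact (measurable_snd hA).inter ((measurableSet_lt measurable_const measurable_snd).inter
      (measurableSet_lt measurable_snd measurable_fst))
  exact Measurable.indicator meas_kd.ennreal_ofReal hset

lemma kac_apply (s : ℝ) {A : Set ℝ} (hA : MeasurableSet A) :
    kacCondMeasure (3 / 2) s A = ∫⁻ x, kind A (s, x) := by
  rw [kacCondMeasure, withDensity_apply _ hA, Measure.restrict_restrict hA,
    ← lintegral_indicator (hA.inter measurableSet_Ioo)]
  rfl

lemma meas_kac : Measurable (kacCondMeasure (3 / 2)) := by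
  refine Measure.measurable_of_measurable_coe _ fun A hA => ?_
  simp_rw [kac_apply _ hA]
  exact (meas_kind hA).lintegral_prod_right'

lemma heat_apply (β T : ℝ) {A : Set ℝ} (hA : MeasurableSet A) :
    heatKernel β T A = ∫⁻ ξ, kacCondMeasure (3 / 2) (T + ξ) A ∂(gammaMeasure (3 / 2) β) := by
  rw [heatKernel, Measure.bind_apply hA ((by exact meas_kac.comp (measurable_id.const_add T) : Measurable fun ξ => kacCondMeasure (3 / 2) (T + ξ)).aemeasurable)]

lemma meas_heat (β : ℝ) (hβ : 0 < β) : Measurable (heatKernel β) := by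
  haveI : IsProbabilityMeasure (gammaMeasure (3/2) β) :=
    isProbabilityMeasure_gammaMeasure (by norm_num) hβ
  refine Measure.measurable_of_measurable_coe _ fun A hA => ?_
  simp_rw [heat_apply _ _ hA]
  have h : Measurable fun q : ℝ × ℝ => kacCondMeasure (3 / 2) (q.1 + q.2) A :=
    ((Measure.measurable_coe hA).comp meas_kac).comp (measurable_fst.add measurable_snd)
  exact h.lintegral_prod_right'



noncomputable def Jc : ℝ≥0∞ :=
  ∫⁻ u in Set.Ioo (0:ℝ) 1, ENNReal.ofReal (u ^ ((3:ℝ)/2 - 1) * (1 - u) ^ ((3:ℝ)/2 - 1))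

variable {β : ℝ}

lemma gammaPDF_of_nonpos' {a r x : ℝ} (ha : 1 < a) (hx : x ≤ 0) : gammaPDF a r x = 0 := by
  rcases lt_or_eq_of_le hx with h | h
  · exact gammaPDF_of_neg h
  · subst h
    simp [gammaPDF_eq, gammaPDFReal, Real.zero_rpow (by linarith : a - 1 ≠ 0)]

lemma meas_gammaPDF' (a r : ℝ) : Measurable (gammaPDF a r) :=
  (measurable_gammaPDFReal a r).ennreal_ofReal

lemma measH (β s : ℝ) : Measurable fun T => gammaPDF (3/2) β T * gammaPDF (3/2) β (s - T) :=
  (meas_gammaPDF' _ _).mul ((meas_gammaPDF' _ _).comp (measurable_const.sub measurable_id))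

lemma conv_nonpos (hβ : 0 < β) {s : ℝ} (hs : s ≤ 0) :
    ∫⁻ T, gammaPDF (3/2) β T * gammaPDF (3/2) β (s - T) = 0 := by
  have h : ∀ T : ℝ, gammaPDF (3/2) β T * gammaPDF (3/2) β (s - T) = 0 := by
    intro T
    rcases le_or_gt T 0 with h | h
    · rw [show gammaPDF (3/2) β T = 0 from gammaPDF_of_nonpos' (by norm_num) h, zero_mul]
    · rw [show gammaPDF (3/2) β (s - T) = 0 from
        gammaPDF_of_nonpos' (by norm_num) (by linarith), mul_zero]
  simp [h]

lemma conv_pos (hβ : 0 < β) {s : ℝ} (hs : 0 < s) :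
    ∫⁻ T, gammaPDF (3/2) β T * gammaPDF (3/2) β (s - T)
      = (Jc * ENNReal.ofReal ((β ^ ((3:ℝ)/2) / Real.Gamma (3/2)) ^ 2))
        * ENNReal.ofReal (s ^ 2 * Real.exp (-(β * s))) := by
  have hΓ : 0 < Real.Gamma (3/2) := Real.Gamma_pos_of_pos (by norm_num)
  set c : ℝ := β ^ ((3:ℝ)/2) / Real.Gamma (3/2) with hc
  have hc0 : 0 ≤ c := by positivity
  set H : ℝ → ℝ≥0∞ := fun T => gammaPDF (3/2) β T * gammaPDF (3/2) β (s - T) with hH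
  have mH : Measurable H := measH β s
  -- change of variables T = s * u
  have hmap : ∫⁻ u, H (s * u) = ENNReal.ofReal s⁻¹ * ∫⁻ T, H T := by
    have h1 : ∫⁻ T, H T ∂(Measure.map (fun u : ℝ => s * u) volume) = ∫⁻ u, H (s * u) :=
      lintegral_map mH (measurable_id.const_mul s)
    rw [Real.map_volume_mul_left hs.ne'] at h1
    rw [← h1, lintegral_smul_measure, abs_of_pos (inv_pos.mpr hs), smul_eq_mul]
  have hsolve : ∫⁻ T, H T = ENNReal.ofReal s * ∫⁻ u, H (s * u) := by
    rw [hmap, ← mul_assoc, ← ENNReal.ofReal_mul hs.le, mul_inv_cancel₀ hs.ne',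
      ENNReal.ofReal_one, one_mul]
  -- pointwise formula for H (s * u)
  have hpt : ∀ u : ℝ, H (s * u)
      = ENNReal.ofReal (c ^ 2 * s * Real.exp (-(β * s)))
        * (Set.Ioo (0:ℝ) 1).indicator
            (fun u => ENNReal.ofReal (u ^ ((3:ℝ)/2 - 1) * (1 - u) ^ ((3:ℝ)/2 - 1))) u := by
    intro u
    by_cases hu : u ∈ Set.Ioo (0:ℝ) 1
    · rw [Set.indicator_of_mem hu]
      obtain ⟨hu0, hu1⟩ := hu
      have h1 : (0:ℝ) ≤ s * u := by positivity
      have h2 : s - s * u = s * (1 - u) := by ring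
      have h3 : (0:ℝ) ≤ s * (1 - u) := by nlinarith
      rw [hH]
      simp only
      rw [gammaPDF_of_nonneg h1, h2, gammaPDF_of_nonneg h3,
        ← ENNReal.ofReal_mul (by positivity), ← ENNReal.ofReal_mul (by positivity)]
      congr 1
      rw [Real.mul_rpow hs.le hu0.le, Real.mul_rpow hs.le (by linarith)]
      have hss : s ^ ((3:ℝ)/2 - 1) * s ^ ((3:ℝ)/2 - 1) = s := by
        rw [← Real.rpow_add hs]
        norm_num
      have hexp : Real.exp (-(β * (s * u))) * Real.exp (-(β * (s * (1 - u))))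
          = Real.exp (-(β * s)) := by
        rw [← Real.exp_add]; congr 1; ring
      calc β ^ ((3:ℝ)/2) / Real.Gamma (3/2) * (s ^ ((3:ℝ)/2 - 1) * u ^ ((3:ℝ)/2 - 1))
            * Real.exp (-(β * (s * u)))
            * (β ^ ((3:ℝ)/2) / Real.Gamma (3/2) * (s ^ ((3:ℝ)/2 - 1) * (1 - u) ^ ((3:ℝ)/2 - 1))
            * Real.exp (-(β * (s * (1 - u)))))
          = c ^ 2 * (s ^ ((3:ℝ)/2 - 1) * s ^ ((3:ℝ)/2 - 1))
            * (Real.exp (-(β * (s * u))) * Real.exp (-(β * (s * (1 - u)))))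
            * (u ^ ((3:ℝ)/2 - 1) * (1 - u) ^ ((3:ℝ)/2 - 1)) := by rw [hc]; ring
        _ = c ^ 2 * s * Real.exp (-(β * s))
            * (u ^ ((3:ℝ)/2 - 1) * (1 - u) ^ ((3:ℝ)/2 - 1)) := by rw [hss, hexp]
    · rw [Set.indicator_of_notMem hu, mul_zero, hH]
      simp only [Set.mem_Ioo, not_and_or, not_lt] at hu
      simp only
      rcases hu with h | h
      · rw [gammaPDF_of_nonpos' (by norm_num) (by nlinarith : s * u ≤ 0), zero_mul]
      · rw [gammaPDF_of_nonpos' (by norm_num)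
          (by nlinarith : s - s * u ≤ 0), mul_zero]
  have mInd : Measurable ((Set.Ioo (0:ℝ) 1).indicator
      (fun u => ENNReal.ofReal (u ^ ((3:ℝ)/2 - 1) * (1 - u) ^ ((3:ℝ)/2 - 1)))) := by
    refine Measurable.indicator ?_ measurableSet_Ioo
    exact (((Real.continuous_rpow_const (by norm_num)).measurable).mul
      (((Real.continuous_rpow_const (by norm_num)).measurable).comp
        (measurable_const.sub measurable_id))).ennreal_ofReal
  have hint : ∫⁻ u, H (s * u) = ENNReal.ofReal (c ^ 2 * s * Real.exp (-(β * s))) * Jc := by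
    simp_rw [hpt]
    rw [lintegral_const_mul _ mInd, Jc, lintegral_indicator measurableSet_Ioo]
  rw [hsolve, hint, ← mul_assoc]
  rw [show ENNReal.ofReal s * ENNReal.ofReal (c ^ 2 * s * Real.exp (-(β * s)))
      = ENNReal.ofReal (c ^ 2) * ENNReal.ofReal (s ^ 2 * Real.exp (-(β * s))) by
    rw [← ENNReal.ofReal_mul hs.le, ← ENNReal.ofReal_mul (by positivity)]
    congr 1; ring]
  ring

lemma conv_total (hβ : 0 < β) :
    ∫⁻ s, ∫⁻ T, gammaPDF (3/2) β T * gammaPDF (3/2) β (s - T) = 1 := by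
  have mjoint : Measurable fun q : ℝ × ℝ => gammaPDF (3/2) β q.2 * gammaPDF (3/2) β (q.1 - q.2) :=
    ((meas_gammaPDF' _ _).comp measurable_snd).mul
      ((meas_gammaPDF' _ _).comp (measurable_fst.sub measurable_snd))
  rw [lintegral_lintegral_swap mjoint.aemeasurable]
  have h : ∀ T : ℝ, ∫⁻ s, gammaPDF (3/2) β T * gammaPDF (3/2) β (s - T) = gammaPDF (3/2) β T := by
    intro T
    have m : Measurable fun x : ℝ => gammaPDF (3/2) β (x - T) :=
      (meas_gammaPDF' _ _).comp (measurable_id.sub_const T)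
    rw [lintegral_const_mul _ m,
      lintegral_sub_right_eq_self (gammaPDF (3/2) β) T,
      lintegral_gammaPDF_eq_one (by norm_num) hβ, mul_one]
  simp_rw [h]
  exact lintegral_gammaPDF_eq_one (by norm_num) hβ

lemma gammaPDF3_pos_eval (hβ : 0 < β) {s : ℝ} (hs : 0 < s) :
    gammaPDF 3 β s = ENNReal.ofReal (β ^ (3:ℝ) / Real.Gamma 3)
      * ENNReal.ofReal (s ^ 2 * Real.exp (-(β * s))) := by
  have hΓ : 0 < Real.Gamma 3 := Real.Gamma_pos_of_pos (by norm_num)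
  rw [gammaPDF_of_nonneg hs.le, ← ENNReal.ofReal_mul (by positivity)]
  congr 1
  rw [show (3:ℝ) - 1 = ((2:ℕ):ℝ) by norm_num, Real.rpow_natCast]
  ring

/-- The convolution identity: the sum of two iid `Gamma(3/2, β)` is `Gamma(3, β)`. -/
lemma conv_eq (hβ : 0 < β) (s : ℝ) :
    ∫⁻ T, gammaPDF (3/2) β T * gammaPDF (3/2) β (s - T) = gammaPDF 3 β s := by
  have hΓ : 0 < Real.Gamma 3 := Real.Gamma_pos_of_pos (by norm_num)
  set q : ℝ≥0∞ := ENNReal.ofReal (β ^ (3:ℝ) / Real.Gamma 3) with hq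
  have hq0 : q ≠ 0 := by
    rw [hq]
    simp only [ne_eq, ENNReal.ofReal_eq_zero, not_le]
    positivity
  have hqt : q ≠ ∞ := ENNReal.ofReal_ne_top
  set D : ℝ≥0∞ := Jc * ENNReal.ofReal ((β ^ ((3:ℝ)/2) / Real.Gamma (3/2)) ^ 2) / q with hD
  have hDq : ∀ s : ℝ, ∫⁻ T, gammaPDF (3/2) β T * gammaPDF (3/2) β (s - T)
      = D * gammaPDF 3 β s := by
    intro s
    rcases le_or_gt s 0 with h | h
    · rw [conv_nonpos hβ h, gammaPDF_of_nonpos' (by norm_num) h, mul_zero]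
    · rw [conv_pos hβ h, gammaPDF3_pos_eval hβ h, hD, ← hq, ← mul_assoc,
        ENNReal.div_mul_cancel hq0 hqt]
  have hD1 : D = 1 := by
    have h1 : ∫⁻ s, D * gammaPDF 3 β s = 1 := by
      rw [← conv_total hβ]
      exact (lintegral_congr fun s => (hDq s).symm)
    rwa [lintegral_const_mul _ (meas_gammaPDF' 3 β),
      lintegral_gammaPDF_eq_one (by norm_num) hβ, mul_one] at h1
  rw [hDq s, hD1, one_mul]


variable {β : ℝ}

lemma final_pointwise (hβ : 0 < β) {A : Set ℝ} (hA : MeasurableSet A) (x : ℝ) :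
    ∫⁻ s, gammaPDF 3 β s * kind A (s, x) = A.indicator (gammaPDF (3/2) β) x := by
  by_cases hxA : x ∈ A
  · by_cases hx : 0 < x
    · rw [Set.indicator_of_mem hxA]
      have hΓ3 : 0 < Real.Gamma 3 := Real.Gamma_pos_of_pos (by norm_num)
      have hΓ32 : 0 < Real.Gamma (3/2) := Real.Gamma_pos_of_pos (by norm_num)
      have hptw : ∀ s : ℝ, gammaPDF 3 β s * kind A (s, x)
          = gammaPDF (3/2) β x * gammaPDF (3/2) β (s - x) := by
        intro s
        by_cases hsx : x < s
        · have hs0 : 0 < s := lt_trans hx hsx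
          have hmem : x ∈ A ∩ Set.Ioo 0 s := ⟨hxA, hx, hsx⟩
          rw [kind]
          simp only
          rw [Set.indicator_of_mem hmem, gammaPDF_of_nonneg hs0.le,
            gammaPDF_of_nonneg hx.le, gammaPDF_of_nonneg (by linarith : (0:ℝ) ≤ s - x),
            ← ENNReal.ofReal_mul (by
              have := Real.Gamma_pos_of_pos (show (0:ℝ) < 3 by norm_num)
              positivity),
            ← ENNReal.ofReal_mul (by positivity)]
          congr 1
          unfold kacCondDensity
          rw [show (2:ℝ) * (3/2) = 3 by norm_num]
          have hs2 : s ^ ((3:ℝ) - 1) ≠ 0 := (Real.rpow_pos_of_pos hs0 _).ne'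
          have hββ : β ^ ((3:ℝ)/2) * β ^ ((3:ℝ)/2) = β ^ (3:ℝ) := by
            rw [← Real.rpow_add hβ]; norm_num
          have hexp : Real.exp (-(β * x)) * Real.exp (-(β * (s - x)))
              = Real.exp (-(β * s)) := by
            rw [← Real.exp_add]; congr 1; ring
          field_simp
          rw [← hββ, ← hexp]
          ring
        · have h0 : kind A (s, x) = 0 := by
            rw [kind]
            simp only
            rw [Set.indicator_of_notMem]
            rintro ⟨-, -, hlt⟩
            exact hsx hlt
          rw [h0, mul_zero,
            show gammaPDF (3/2) β (s - x) = 0 from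
              gammaPDF_of_nonpos (by norm_num) (by linarith [le_of_not_gt hsx]), mul_zero]
      simp_rw [hptw]
      have m : Measurable fun s : ℝ => gammaPDF (3/2) β (s - x) :=
        (meas_gammaPDF _ _).comp (measurable_id.sub_const x)
      rw [lintegral_const_mul _ m, lintegral_sub_right_eq_self (gammaPDF (3/2) β) x,
        lintegral_gammaPDF_eq_one (by norm_num) hβ, mul_one]
    · have h0 : ∀ s : ℝ, kind A (s, x) = 0 := by
        intro s
        rw [kind]
        simp only
        rw [Set.indicator_of_notMem]
        rintro ⟨-, hx0, -⟩
        exact hx hx0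
      simp_rw [h0, mul_zero, lintegral_zero]
      rw [Set.indicator_of_mem hxA,
        gammaPDF_of_nonpos (by norm_num) (le_of_not_gt hx)]
  · have h0 : ∀ s : ℝ, kind A (s, x) = 0 := by
      intro s
      rw [kind]
      simp only
      rw [Set.indicator_of_notMem]
      rintro ⟨hxA', -⟩
      exact hxA hxA'
    simp_rw [h0, mul_zero, lintegral_zero, Set.indicator_of_notMem hxA]

lemma final_step (hβ : 0 < β) {A : Set ℝ} (hA : MeasurableSet A) :
    ∫⁻ s, gammaPDF 3 β s * kacCondMeasure (3/2) s A = gammaMeasure (3/2) β A := by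
  have hswap : ∫⁻ s, ∫⁻ x, gammaPDF 3 β s * kind A (s, x)
      = ∫⁻ x, ∫⁻ s, gammaPDF 3 β s * kind A (s, x) := by
    refine lintegral_lintegral_swap ?_
    exact (((meas_gammaPDF 3 β).comp measurable_fst).mul (meas_kind hA)).aemeasurable
  calc ∫⁻ s, gammaPDF 3 β s * kacCondMeasure (3/2) s A
      = ∫⁻ s, ∫⁻ x, gammaPDF 3 β s * kind A (s, x) := by
        refine lintegral_congr fun s => ?_
        have m : Measurable fun x : ℝ => kind A (s, x) := by
          exact (meas_kind hA).comp measurable_prodMk_left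
        rw [kac_apply s hA, ← lintegral_const_mul _ m]
    _ = ∫⁻ x, ∫⁻ s, gammaPDF 3 β s * kind A (s, x) := hswap
    _ = ∫⁻ x, A.indicator (gammaPDF (3/2) β) x :=
        lintegral_congr fun x => final_pointwise hβ hA x
    _ = gammaMeasure (3/2) β A := by
        rw [lintegral_indicator hA, gammaMeasure, withDensity_apply _ hA]

end KacInv

open KacInv

/-- the `Gamma(3/2, β)` distribution (density `c √x e^{-βx}`, the χ²
distribution with 3 degrees of freedom) is invariant for the heat-transfer kernel. -/
theorem gamma_invariant_heatKernel (β : ℝ) (hβ : 0 < β) :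
    (gammaMeasure (3 / 2) β).bind (heatKernel β) = gammaMeasure (3 / 2) β := by

  haveI : IsProbabilityMeasure (gammaMeasure (3/2) β) :=
    isProbabilityMeasure_gammaMeasure (by norm_num) hβ
  refine Measure.ext fun A hA => ?_
  set f := gammaPDF (3/2) β with hf
  have mf : Measurable f := meas_gammaPDF _ _
  set G : ℝ → ℝ≥0∞ := fun s => kacCondMeasure (3/2) s A with hG
  have mG : Measurable G := (Measure.measurable_coe hA).comp meas_kac
  have key1 : ∀ T : ℝ, heatKernel β T A = ∫⁻ s, f (s - T) * G s := by
    intro T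
    have hGT : Measurable fun ξ : ℝ => G (T + ξ) := mG.comp (measurable_id.const_add T)
    rw [heat_apply β T hA]
    have : ∫⁻ ξ, kacCondMeasure (3/2) (T + ξ) A ∂(gammaMeasure (3/2) β)
        = ∫⁻ ξ, f ξ * G (T + ξ) := by
      rw [gammaMeasure, lintegral_withDensity_eq_lintegral_mul volume mf hGT]
      rfl
    rw [this]
    calc ∫⁻ ξ, f ξ * G (T + ξ)
        = ∫⁻ ξ, (fun s => f (s - T) * G s) (ξ + T) := by
          refine lintegral_congr fun ξ => ?_
          simp only
          rw [add_sub_cancel_right, add_comm T ξ]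
      _ = ∫⁻ s, f (s - T) * G s := lintegral_add_right_eq_self (fun s => f (s - T) * G s) T
  have mkey : Measurable fun T : ℝ => ∫⁻ s, f (s - T) * G s := by
    have : Measurable fun q : ℝ × ℝ => f (q.2 - q.1) * G q.2 :=
      (mf.comp (measurable_snd.sub measurable_fst)).mul (mG.comp measurable_snd)
    exact this.lintegral_prod_right'
  rw [Measure.bind_apply hA (meas_heat β hβ).aemeasurable]
  calc ∫⁻ T, heatKernel β T A ∂(gammaMeasure (3/2) β)
      = ∫⁻ T, f T * ∫⁻ s, f (s - T) * G s := by
        rw [gammaMeasure, lintegral_withDensity_eq_lintegral_mul volume mf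
          (by simpa [key1] using mkey : Measurable fun T : ℝ => heatKernel β T A)]
        refine lintegral_congr fun T => ?_
        simp only [Pi.mul_apply]
        rw [key1 T]
    _ = ∫⁻ T, ∫⁻ s, f T * (f (s - T) * G s) := by
        refine lintegral_congr fun T => ?_
        have m : Measurable fun s : ℝ => f (s - T) * G s := by
          exact (mf.comp (measurable_id.sub_const T)).mul mG
        rw [lintegral_const_mul _ m]
    _ = ∫⁻ s, ∫⁻ T, f T * (f (s - T) * G s) := by
        refine lintegral_lintegral_swap ?_
        exact ((mf.comp measurable_fst).mul
          ((mf.comp (measurable_snd.sub measurable_fst)).mul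
            (mG.comp measurable_snd))).aemeasurable
    _ = ∫⁻ s, (∫⁻ T, f T * f (s - T)) * G s := by
        refine lintegral_congr fun s => ?_
        rw [← lintegral_mul_const _ (measH β s)]
        exact lintegral_congr fun T => by rw [mul_assoc]
    _ = ∫⁻ s, gammaPDF 3 β s * G s := by
        refine lintegral_congr fun s => ?_
        rw [conv_eq hβ s]
    _ = gammaMeasure (3/2) β A := final_step hβ hA
end

section
/- In the abstract mean-field combinatorics of the appendix: the number C_{n,ess}^{(N)} of essential connected 1-sequences of length n among N particles satisfies (N−1)^{−n} C_{n,ess}^{(N)} = ∏_{k=1}^{n} k(N−k)/(N−1), hence (N−1)^{−n} C_{n,ess}^{(N)} ≤ n! for all N > n, and (N−1)^{−n} C_{n,ess}^{(N)} → n! as N → ∞. -/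
open Finset Filter

/-- The union `V_i` of the pairs occurring later than position `i` in the sequence `θ`. -/
def laterUnion {N n : ℕ} (theta : Fin n → Finset (Fin N)) (i : Fin n) : Finset (Fin N) :=
  Finset.univ.biUnion fun k => if i < k then theta k else ∅

/-- An essential connected `1`-sequence of length `n` among `N` particles: an ordered
sequence of unordered pairs (2-element subsets) `θ 0, …, θ (n-1)` of `{1,…,N}` such that
particle `1` (here the vertex `⟨0, _⟩`) belongs to the last pair, every pair except the
last intersects the union of the later pairs (connectedness), and no pair is contained
in the union of the later pairs (essentiality). -/
def IsEssConnSeq {N n : ℕ} (theta : Fin n → Finset (Fin N)) : Prop :=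
  (∀ i, (theta i).card = 2) ∧
  (∀ i : Fin n, (i : ℕ) < n - 1 → (theta i ∩ laterUnion theta i).Nonempty) ∧
  (∀ i, ¬ theta i ⊆ laterUnion theta i) ∧
  (∀ hn : 0 < n, ∀ hN : 0 < N, (⟨0, hN⟩ : Fin N) ∈ theta ⟨n - 1, by omega⟩)

/-- `C_{n,ess}^{(N)}`: the number of essential connected `1`-sequences of length `n`
among `N` particles. -/
noncomputable def essConnCount (N n : ℕ) : ℕ :=
  Nat.card {theta : Fin n → Finset (Fin N) // IsEssConnSeq theta}

namespace EssAux
variable {N n : ℕ}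
def totalUnion (θ : Fin n → Finset (Fin N)) : Finset (Fin N) := Finset.univ.biUnion θ
lemma mem_laterUnion {θ : Fin n → Finset (Fin N)} {i : Fin n} {a : Fin N} :
    a ∈ laterUnion θ i ↔ ∃ k, i < k ∧ a ∈ θ k := by
  simp only [laterUnion, Finset.mem_biUnion, Finset.mem_univ, true_and]
  constructor
  · rintro ⟨k, hk⟩
    by_cases h : i < k
    · exact ⟨k, h, by simpa [h] using hk⟩
    · simp [h] at hk
  · rintro ⟨k, h, hk⟩
    exact ⟨k, by simp [h, hk]⟩
lemma mem_totalUnion {θ : Fin n → Finset (Fin N)} {a : Fin N} :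
    a ∈ totalUnion θ ↔ ∃ k, a ∈ θ k := by simp [totalUnion]
lemma laterUnion_succ (θ : Fin (n+1) → Finset (Fin N)) (i : Fin n) :
    laterUnion (θ ∘ Fin.succ) i = laterUnion θ i.succ := by
  ext a
  simp only [mem_laterUnion, Function.comp]
  constructor
  · rintro ⟨k, h, hk⟩
    exact ⟨k.succ, by simpa using h, hk⟩
  · rintro ⟨k, h, hk⟩
    rcases Fin.eq_zero_or_eq_succ k with rfl | ⟨j, rfl⟩
    · exact absurd h (Fin.not_lt_zero _).elim
    · exact ⟨j, by simpa using h, hk⟩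
lemma laterUnion_zero (θ : Fin (n+1) → Finset (Fin N)) :
    laterUnion θ 0 = totalUnion (θ ∘ Fin.succ) := by
  ext a
  simp only [mem_laterUnion, mem_totalUnion, Function.comp]
  constructor
  · rintro ⟨k, h, hk⟩
    rcases Fin.eq_zero_or_eq_succ k with rfl | ⟨j, rfl⟩
    · exact absurd h (lt_irrefl _)
    · exact ⟨j, hk⟩
  · rintro ⟨k, hk⟩
    exact ⟨k.succ, k.succ_pos, hk⟩

lemma tail_isEss (hn : 1 ≤ n) (θ : Fin (n+1) → Finset (Fin N)) (h : IsEssConnSeq θ) :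
    IsEssConnSeq (θ ∘ Fin.succ) := by
  obtain ⟨h1, h2, h3, h4⟩ := h
  refine ⟨fun i => h1 _, ?_, ?_, ?_⟩
  · intro i hi
    rw [laterUnion_succ]
    exact h2 i.succ (by simp; omega)
  · intro i
    rw [laterUnion_succ]
    exact h3 i.succ
  · intro hn' hN
    have := h4 (by omega) hN
    have he : (⟨n - 1, by omega⟩ : Fin n).succ = ⟨(n+1) - 1, by omega⟩ := by
      ext; simp; omega
    simpa [Function.comp, he] using this

lemma cons_isEss (hn : 1 ≤ n) (θ' : Fin n → Finset (Fin N)) (h : IsEssConnSeq θ')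
    (p : Finset (Fin N)) (hp2 : p.card = 2) (hpi : (p ∩ totalUnion θ').Nonempty)
    (hps : ¬ p ⊆ totalUnion θ') :
    IsEssConnSeq (Fin.cases p θ' : Fin (n+1) → Finset (Fin N)) := by
  obtain ⟨h1, h2, h3, h4⟩ := h
  have hcomp : (Fin.cases p θ' : Fin (n+1) → Finset (Fin N)) ∘ Fin.succ = θ' := by
    funext j; simp [Function.comp]
  have hLs : ∀ i : Fin n, laterUnion (Fin.cases p θ' : Fin (n+1) → Finset (Fin N)) i.succ
      = laterUnion θ' i := by
    intro i; rw [← laterUnion_succ, hcomp]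
  have hL0 : laterUnion (Fin.cases p θ' : Fin (n+1) → Finset (Fin N)) 0 = totalUnion θ' := by
    rw [laterUnion_zero, hcomp]
  refine ⟨?_, ?_, ?_, ?_⟩
  · intro i
    rcases Fin.eq_zero_or_eq_succ i with rfl | ⟨j, rfl⟩
    · simpa using hp2
    · simpa using h1 j
  · intro i hi
    rcases Fin.eq_zero_or_eq_succ i with rfl | ⟨j, rfl⟩
    · rw [hL0]; simpa using hpi
    · rw [hLs]
      simpa using h2 j (by simp at hi ⊢; omega)
  · intro i
    rcases Fin.eq_zero_or_eq_succ i with rfl | ⟨j, rfl⟩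
    · rw [hL0]; simpa using hps
    · rw [hLs]; simpa using h3 j
  · intro hn' hN
    have he : (⟨n - 1, by omega⟩ : Fin n).succ = ⟨(n+1) - 1, by omega⟩ := by
      ext; simp; omega
    have := h4 (by omega) hN
    rw [← he]
    simpa using this

lemma totalUnion_card (hn : 1 ≤ n) (θ : Fin n → Finset (Fin N)) (h : IsEssConnSeq θ) :
    (totalUnion θ).card = n + 1 := by
  induction n with
  | zero => omega
  | succ m ih =>
    rcases Nat.eq_zero_or_pos m with rfl | hm
    · have : totalUnion θ = θ 0 := by
        ext a; simp only [mem_totalUnion]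
        constructor
        · rintro ⟨k, hk⟩
          have hk1 := k.is_lt
          have : k = 0 := by ext; omega
          rwa [this] at hk
        · exact fun hk => ⟨0, hk⟩
      rw [this, h.1 0]
    · have htail := tail_isEss hm θ h
      have hU : (totalUnion (θ ∘ Fin.succ)).card = m + 1 := ih hm _ htail
      have hsplit : totalUnion θ = θ 0 ∪ totalUnion (θ ∘ Fin.succ) := by
        ext a
        simp only [mem_totalUnion, Finset.mem_union, Function.comp]
        constructor
        · rintro ⟨k, hk⟩
          rcases Fin.eq_zero_or_eq_succ k with rfl | ⟨j, rfl⟩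
          · exact Or.inl hk
          · exact Or.inr ⟨j, hk⟩
        · rintro (hk | ⟨j, hj⟩)
          · exact ⟨0, hk⟩
          · exact ⟨j.succ, hj⟩
      set U := totalUnion (θ ∘ Fin.succ) with hUdef
      obtain ⟨x, hx⟩ := h.2.1 0 (by simp; omega)
      rw [Finset.mem_inter, laterUnion_zero] at hx
      obtain ⟨y, hy, hyU⟩ : ∃ y ∈ θ 0, y ∉ U := by
        by_contra hcon
        push_neg at hcon
        exact h.2.2.1 0 (by rw [laterUnion_zero]; exact hcon)
      have hxy : x ≠ y := fun hxy => hyU (hxy ▸ hx.2)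
      have hp : θ 0 = {x, y} := by
        apply (Finset.eq_of_subset_of_card_le ?_ ?_).symm
        · intro z hz
          rcases Finset.mem_insert.1 hz with rfl | hz
          · exact hx.1
          · rwa [Finset.mem_singleton.1 hz]
        · rw [h.1 0, Finset.card_insert_of_notMem (by simp [hxy]), Finset.card_singleton]
      rw [hsplit, hp]
      have heq : ({x, y} : Finset (Fin N)) ∪ U = insert y U := by
        ext a
        simp only [Finset.mem_union, Finset.mem_insert, Finset.mem_singleton]
        constructor
        · rintro ((rfl | rfl) | h)
          · exact Or.inr hx.2
          · exact Or.inl rfl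
          · exact Or.inr h
        · rintro (rfl | h)
          · exact Or.inl (Or.inr rfl)
          · exact Or.inr h
      rw [heq, Finset.card_insert_of_notMem hyU, hU]

lemma card_pairs_filter (U : Finset (Fin N)) :
    ((Finset.univ : Finset (Finset (Fin N))).filter
      fun p => p.card = 2 ∧ (p ∩ U).Nonempty ∧ ¬ p ⊆ U).card = U.card * (N - U.card) := by
  classical
  have hcompl : (U ×ˢ Uᶜ).card = U.card * (N - U.card) := by
    rw [Finset.card_product, Finset.card_compl, Fintype.card_fin]
  rw [← hcompl]
  symm
  apply Finset.card_bij (fun q _ => ({q.1, q.2} : Finset (Fin N)))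
  · rintro ⟨a, b⟩ hab
    simp only [Finset.mem_product, Finset.mem_compl] at hab
    have hne : a ≠ b := fun h => hab.2 (h ▸ hab.1)
    simp only [Finset.mem_filter, Finset.mem_univ, true_and]
    refine ⟨?_, ⟨a, ?_⟩, ?_⟩
    · rw [Finset.card_insert_of_notMem (by simp [hne]), Finset.card_singleton]
    · simp [hab.1]
    · intro hsub
      exact hab.2 (hsub (by simp))
  · rintro ⟨a, b⟩ hab ⟨c, d⟩ hcd h
    simp only [Finset.mem_product, Finset.mem_compl] at hab hcd
    have ha : a = c := by
      have : a ∈ ({c, d} : Finset (Fin N)) := h ▸ (by simp)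
      rcases Finset.mem_insert.1 this with rfl | h'
      · rfl
      · exact absurd hab.1 (by rw [Finset.mem_singleton.1 h']; exact hcd.2)
    have hb : b = d := by
      have : b ∈ ({c, d} : Finset (Fin N)) := h ▸ (by simp)
      rcases Finset.mem_insert.1 this with rfl | h'
      · exact absurd hcd.1 hab.2
      · exact Finset.mem_singleton.1 h'
    simp [ha, hb]
  · intro p hp
    simp only [Finset.mem_filter, Finset.mem_univ, true_and] at hp
    obtain ⟨hp2, ⟨a, ha⟩, hps⟩ := hp
    rw [Finset.mem_inter] at ha
    obtain ⟨b, hbp, hbU⟩ : ∃ b ∈ p, b ∉ U := by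
      by_contra hcon; push_neg at hcon; exact hps hcon
    have hne : a ≠ b := fun h => hbU (h ▸ ha.2)
    refine ⟨(a, b), by simp [Finset.mem_product, ha.2, hbU], ?_⟩
    apply Finset.eq_of_subset_of_card_le
    · intro z hz
      rcases Finset.mem_insert.1 hz with rfl | hz
      · exact ha.1
      · rwa [Finset.mem_singleton.1 hz]
    · rw [hp2, Finset.card_insert_of_notMem (by simp [hne]), Finset.card_singleton]

attribute [local instance] Classical.propDecidable

lemma essConnCount_eq_filter :
    essConnCount N n
      = ((Finset.univ : Finset (Fin n → Finset (Fin N))).filter IsEssConnSeq).card := by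
  classical
  rw [essConnCount, Nat.card_eq_fintype_card, Fintype.card_subtype]


lemma fiber_card (hn : 1 ≤ n) (θ' : Fin n → Finset (Fin N)) (h' : IsEssConnSeq θ') :
    (((Finset.univ : Finset (Fin (n+1) → Finset (Fin N))).filter IsEssConnSeq).filter
      (fun θ => θ ∘ Fin.succ = θ')).card = (n + 1) * (N - (n + 1)) := by
  classical
  have hU : (totalUnion θ').card = n + 1 := totalUnion_card hn θ' h'
  have key : (((Finset.univ : Finset (Fin (n+1) → Finset (Fin N))).filter IsEssConnSeq).filter
      (fun θ => θ ∘ Fin.succ = θ')).card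
      = (totalUnion θ').card * (N - (totalUnion θ').card) := by
    rw [← card_pairs_filter (totalUnion θ')]
    apply Finset.card_bij (fun θ _ => θ 0)
    · intro θ hθ
      simp only [Finset.mem_filter, Finset.mem_univ, true_and] at hθ
      obtain ⟨hθ1, hθ2⟩ := hθ
      simp only [Finset.mem_filter, Finset.mem_univ, true_and]
      refine ⟨hθ1.1 0, ?_, ?_⟩
      · have := hθ1.2.1 0 (by simp; omega)
        rwa [laterUnion_zero, hθ2] at this
      · have := hθ1.2.2.1 0
        rwa [laterUnion_zero, hθ2] at this
    · intro θ₁ h₁ θ₂ h₂ heq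
      simp only [Finset.mem_filter] at h₁ h₂
      funext i
      rcases Fin.eq_zero_or_eq_succ i with rfl | ⟨j, rfl⟩
      · exact heq
      · rw [show θ₁ j.succ = (θ₁ ∘ Fin.succ) j from rfl,
          show θ₂ j.succ = (θ₂ ∘ Fin.succ) j from rfl, h₁.2, h₂.2]
    · intro p hp
      simp only [Finset.mem_filter, Finset.mem_univ, true_and] at hp
      refine ⟨Fin.cases p θ', ?_, by simp⟩
      simp only [Finset.mem_filter, Finset.mem_univ, true_and]
      refine ⟨cons_isEss hn θ' h' p hp.1 hp.2.1 hp.2.2, ?_⟩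
      funext j; simp [Function.comp]
  rw [key, hU]

lemma step_count (hn : 1 ≤ n) :
    essConnCount N (n+1) = essConnCount N n * ((n + 1) * (N - (n + 1))) := by
  classical
  rw [essConnCount_eq_filter, essConnCount_eq_filter]
  rw [Finset.card_eq_sum_card_fiberwise
    (f := fun θ : Fin (n+1) → Finset (Fin N) => θ ∘ Fin.succ)
    (t := (Finset.univ : Finset (Fin n → Finset (Fin N))).filter IsEssConnSeq)
    (fun θ hθ => by
      simp only [Finset.mem_coe, Finset.mem_filter, Finset.mem_univ, true_and] at *
      exact tail_isEss hn θ hθ)]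
  rw [Finset.sum_congr rfl (fun θ' hθ' => by
    simp only [Finset.mem_filter, Finset.mem_univ, true_and] at hθ'
    exact fiber_card hn θ' hθ')]
  rw [Finset.sum_const, smul_eq_mul]

lemma count_zero : essConnCount N 0 = 1 := by
  have huniv : ∀ θ : Fin 0 → Finset (Fin N), IsEssConnSeq θ := fun θ =>
    ⟨fun i => i.elim0, fun i => i.elim0, fun i => i.elim0, fun hn => absurd hn (by omega)⟩
  rw [essConnCount, Nat.card_congr (Equiv.subtypeUnivEquiv huniv)]
  simp [Nat.card_eq_fintype_card]

lemma count_one (hN : 1 ≤ N) : essConnCount N 1 = N - 1 := by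
  classical
  rw [essConnCount_eq_filter]
  have hlater : ∀ (θ : Fin 1 → Finset (Fin N)) (i : Fin 1), laterUnion θ i = ∅ := by
    intro θ i
    ext a
    simp only [mem_laterUnion, Finset.notMem_empty, iff_false, not_exists]
    intro k
    have h1 := i.is_lt; have h2 := k.is_lt
    intro hik
    rw [Fin.lt_def] at hik; omega
  have hchar : ∀ θ : Fin 1 → Finset (Fin N),
      IsEssConnSeq θ ↔ ((θ 0).card = 2 ∧ (⟨0, hN⟩ : Fin N) ∈ θ 0) := by
    intro θ
    constructor
    · intro h
      exact ⟨h.1 0, h.2.2.2 one_pos hN⟩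
    · intro h
      refine ⟨?_, ?_, ?_, ?_⟩
      · intro i
        have h1 := i.is_lt
        have : i = 0 := by ext; omega
        rw [this]; exact h.1
      · intro i hi; simp at hi
      · intro i
        rw [hlater]
        intro hsub
        have h1 := i.is_lt
        have hi0 : i = 0 := by ext; omega
        rw [hi0] at hsub
        have he : θ 0 = ∅ := Finset.subset_empty.1 hsub
        rw [he] at h
        simp at h
      · intro hn' hN'
        exact h.2
    
  rw [Finset.filter_congr (fun θ _ => by rw [hchar θ])]
  have : ((Finset.univ : Finset (Fin N)).erase ⟨0, hN⟩).card = N - 1 := by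
    rw [Finset.card_erase_of_mem (Finset.mem_univ _), Finset.card_univ, Fintype.card_fin]
  rw [← this]
  symm
  apply Finset.card_bij (fun b _ => (fun _ : Fin 1 => ({⟨0, hN⟩, b} : Finset (Fin N))))
  · intro b hb
    simp only [Finset.mem_erase] at hb
    simp only [Finset.mem_filter, Finset.mem_univ, true_and]
    constructor
    · rw [Finset.card_insert_of_notMem (by simp [Ne.symm hb.1]), Finset.card_singleton]
    · simp
  · intro a ha b hb heq
    simp only [Finset.mem_erase] at ha hb
    have : ({⟨0, hN⟩, a} : Finset (Fin N)) = {⟨0, hN⟩, b} := congrFun heq 0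
    have haa : a ∈ ({⟨0, hN⟩, b} : Finset (Fin N)) := this ▸ (by simp)
    rcases Finset.mem_insert.1 haa with h1 | h1
    · exact absurd h1 ha.1
    · exact Finset.mem_singleton.1 h1
  · intro θ hθ
    simp only [Finset.mem_filter, Finset.mem_univ, true_and] at hθ
    obtain ⟨h2, h0⟩ := hθ
    obtain ⟨x, y, hxy, hp⟩ := Finset.card_eq_two.1 h2
    have h0' : (⟨0, hN⟩ : Fin N) = x ∨ (⟨0, hN⟩ : Fin N) = y := by
      rw [hp] at h0; simpa using h0
    rcases h0' with rfl | rfl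
    · refine ⟨y, by simp [Finset.mem_erase, Ne.symm hxy], ?_⟩
      funext i
      have h1 := i.is_lt
      have : i = 0 := by ext; omega
      rw [this, hp]
    · refine ⟨x, by simp [Finset.mem_erase, hxy], ?_⟩
      funext i
      have h1 := i.is_lt
      have : i = 0 := by ext; omega
      rw [this, hp]
      exact Finset.pair_comm _ _

lemma count_formula (hN : 1 ≤ N) (n : ℕ) :
    essConnCount N n = ∏ k ∈ Finset.range n, (k + 1) * (N - (k + 1)) := by
  induction n with
  | zero => simpa using count_zero
  | succ m ih =>
    rcases Nat.eq_zero_or_pos m with rfl | hm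
    · simpa using count_one hN
    · rw [step_count hm, ih, Finset.prod_range_succ]

lemma hfact_prod (m : ℕ) : ∏ k ∈ Finset.range m, ((k : ℝ) + 1) = Nat.factorial m := by
  induction m with
  | zero => simp
  | succ l ih =>
    rw [Finset.prod_range_succ, ih, Nat.factorial_succ]
    push_cast
    ring

end EssAux

/-- `(N−1)^{−n} C_{n,ess}^{(N)} = ∏_{k=1}^{n} k (N−k)/(N−1)`, hence
`(N−1)^{−n} C_{n,ess}^{(N)} ≤ n!` for all `N > n`, and
`(N−1)^{−n} C_{n,ess}^{(N)} → n!` as `N → ∞`. -/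
theorem essConnCount_asymptotics (n : ℕ) :
    (∀ N : ℕ, n < N →
      (((N : ℝ) - 1)⁻¹) ^ n * essConnCount N n =
        ∏ k ∈ Finset.range n, ((k + 1 : ℝ) * ((N : ℝ) - (k + 1)) / ((N : ℝ) - 1))) ∧
    (∀ N : ℕ, n < N →
      (((N : ℝ) - 1)⁻¹) ^ n * essConnCount N n ≤ (Nat.factorial n : ℝ)) ∧
    Tendsto (fun N : ℕ => (((N : ℝ) - 1)⁻¹) ^ n * essConnCount N n) atTop
      (nhds (Nat.factorial n : ℝ)) := by
  have key : ∀ N : ℕ, n < N →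
      (((N : ℝ) - 1)⁻¹) ^ n * essConnCount N n =
        ∏ k ∈ Finset.range n, ((k + 1 : ℝ) * ((N : ℝ) - (k + 1)) / ((N : ℝ) - 1)) := by
    intro N hN
    rw [EssAux.count_formula (by omega) n, Nat.cast_prod]
    have hcast : ∀ k ∈ Finset.range n,
        ((((k + 1) * (N - (k + 1)) : ℕ)) : ℝ) = ((k : ℝ) + 1) * ((N : ℝ) - ((k : ℝ) + 1)) := by
      intro k hk
      have hk' : k + 1 ≤ N := by simp only [Finset.mem_range] at hk; omega
      push_cast [Nat.cast_sub hk']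
      ring
    rw [Finset.prod_congr rfl hcast]
    rw [Finset.prod_div_distrib, Finset.prod_const, Finset.card_range]
    ring
  refine ⟨key, ?_, ?_⟩
  · intro N hN
    rw [key N hN, ← EssAux.hfact_prod n]
    apply Finset.prod_le_prod
    · intro k hk
      simp only [Finset.mem_range] at hk
      have hkN : (k : ℝ) + 2 ≤ (N : ℝ) := by
        have : k + 2 ≤ N := by omega
        exact_mod_cast this
      apply div_nonneg (mul_nonneg (by positivity) (by linarith)) (by linarith)
    · intro k hk
      simp only [Finset.mem_range] at hk
      have hkN : (k : ℝ) + 2 ≤ (N : ℝ) := by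
        have : k + 2 ≤ N := by omega
        exact_mod_cast this
      rw [div_le_iff₀ (by linarith : (0:ℝ) < (N:ℝ) - 1)]
      have h1 : ((k:ℝ) + 1) * ((N:ℝ) - ((k:ℝ)+1)) ≤ ((k:ℝ) + 1) * ((N:ℝ) - 1) :=
        mul_le_mul_of_nonneg_left (by linarith) (by positivity)
      linarith
  · have hg : Tendsto (fun N : ℕ =>
        ∏ k ∈ Finset.range n, ((k + 1 : ℝ) * ((N : ℝ) - (k + 1)) / ((N : ℝ) - 1))) atTop
        (nhds (∏ k ∈ Finset.range n, ((k : ℝ) + 1))) := by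
      apply tendsto_finset_prod
      intro k _
      have h0 : Tendsto (fun N : ℕ => (N : ℝ) - 1) atTop atTop := by
        simpa [sub_eq_add_neg] using
          tendsto_atTop_add_const_right atTop (-1 : ℝ) tendsto_natCast_atTop_atTop
      have h1 : Tendsto (fun N : ℕ => (((k : ℝ) + 1) * (k : ℝ)) / ((N : ℝ) - 1)) atTop
          (nhds 0) := tendsto_const_nhds.div_atTop h0
      have h2 : Tendsto (fun N : ℕ => ((k : ℝ) + 1) - (((k : ℝ) + 1) * (k : ℝ)) / ((N : ℝ) - 1))
          atTop (nhds (((k : ℝ) + 1) - 0)) := tendsto_const_nhds.sub h1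
      rw [sub_zero] at h2
      apply h2.congr'
      filter_upwards [eventually_ge_atTop 2] with N hN2
      have hne : (N : ℝ) - 1 ≠ 0 := by
        have : (2 : ℝ) ≤ (N : ℝ) := by exact_mod_cast hN2
        linarith
      field_simp
      ring
    rw [EssAux.hfact_prod n] at hg
    apply hg.congr'
    filter_upwards [eventually_gt_atTop n] with N hN
    exact (key N hN).symm
end
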